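/- Under the (not necessarily stationary) two-sequence 1-mer model, for every w ∈ [L] one has π₁(w) = (1/n)·E[X₁^w] and π₂(w) = (1/n)·E[X₂^w], and for all w, u ∈ [L] the joint single-site probability satisfies P(w,u) = (1/2)·( π₁(w) + π₂(u) − (π₁(w)·π₂(u)/n)·E[ ( X₁^w/π₁(w) − X₂^u/π₂(u) )² ] ). -/

import Mathlib

open Finset

lemma sum_prod_eq {S : Type*} [Fintype S] [DecidableEq S] (n : ℕ)
    (F : Fin n → S → ℝ) :
    ∑ ω : Fin n → S, ∏ k, F k (ω k) = ∏ k, ∑ x, F k x := by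
  rw [Finset.prod_univ_sum, Fintype.piFinset_univ]

lemma E_single {S : Type*} [Fintype S] [DecidableEq S] (n : ℕ)
    (q f : S → ℝ) (hq : ∑ x, q x = 1) (i : Fin n) :
    ∑ ω : Fin n → S, (∏ k, q (ω k)) * f (ω i) = ∑ x, q x * f x := by
  have h : ∀ ω : Fin n → S, (∏ k, q (ω k)) * f (ω i)
      = ∏ k, (q (ω k) * (if k = i then f (ω k) else 1)) := by
    intro ω
    rw [Finset.prod_mul_distrib, Finset.prod_ite_eq' univ i fun k => f (ω k)]
    simp
  simp_rw [h]
  rw [sum_prod_eq n (fun k x => q x * (if k = i then f x else 1))]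
  have h2 : ∀ k : Fin n, (∑ x, q x * (if k = i then f x else 1))
      = if k = i then (∑ x, q x * f x) else 1 := by
    intro k
    by_cases hk : k = i <;> simp [hk, hq]
  simp_rw [h2]
  rw [Finset.prod_ite_eq' univ i fun _ => ∑ x, q x * f x]
  simp

lemma E_pair {S : Type*} [Fintype S] [DecidableEq S] (n : ℕ)
    (q f g : S → ℝ) (hq : ∑ x, q x = 1) (i j : Fin n) (hij : i ≠ j) :
    ∑ ω : Fin n → S, (∏ k, q (ω k)) * (f (ω i) * g (ω j))
      = (∑ x, q x * f x) * (∑ x, q x * g x) := by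
  have h : ∀ ω : Fin n → S, (∏ k, q (ω k)) * (f (ω i) * g (ω j))
      = ∏ k, (q (ω k) * (if k = i then f (ω k) else 1)
              * (if k = j then g (ω k) else 1)) := by
    intro ω
    rw [Finset.prod_mul_distrib, Finset.prod_mul_distrib,
        Finset.prod_ite_eq' univ i fun k => f (ω k),
        Finset.prod_ite_eq' univ j fun k => g (ω k)]
    simp [mul_assoc]
  simp_rw [h]
  rw [sum_prod_eq n (fun k x => q x * (if k = i then f x else 1) * (if k = j then g x else 1))]
  have h2 : ∀ k : Fin n, (∑ x, q x * (if k = i then f x else 1)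
        * (if k = j then g x else 1))
      = (if k = i then (∑ x, q x * f x) else 1)
        * (if k = j then (∑ x, q x * g x) else 1) := by
    intro k
    rcases eq_or_ne k i with rfl|hk
    · simp [if_neg hij]
    · rcases eq_or_ne k j with rfl|hk2
      · simp [if_neg hk]
      · simp [hk, hk2, hq]
  simp_rw [h2]
  rw [Finset.prod_mul_distrib,
      Finset.prod_ite_eq' univ i fun _ => ∑ x, q x * f x,
      Finset.prod_ite_eq' univ j fun _ => ∑ x, q x * g x]
  simp


/-!
Two-sequence 1-mer model (not necessarily stationary): site pairs i.i.d. with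
joint distribution `P` on `[L] × [L]`, whose marginals `π₁`, `π₂` are strictly
positive.  Then `π₁(w) = E[X₁^w]/n`, `π₂(w) = E[X₂^w]/n`, and
`P(w,u) = ½(π₁(w) + π₂(u) − (π₁(w)π₂(u)/n) E[(X₁^w/π₁(w) − X₂^u/π₂(u))²])`.
-/
theorem onemer_identifiability_of_joint_distribution
    (L n : ℕ) (hL : 1 ≤ L) (hn : 1 ≤ n)
    (P : Fin L → Fin L → ℝ)
    (hP0 : ∀ w u, 0 ≤ P w u)
    (hP1 : ∑ w, ∑ u, P w u = 1)
    (π₁ π₂ : Fin L → ℝ)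
    (hπ₁ : ∀ w, π₁ w = ∑ u, P w u)
    (hπ₂ : ∀ u, π₂ u = ∑ w, P w u)
    (hπ₁pos : ∀ w, 0 < π₁ w)
    (hπ₂pos : ∀ u, 0 < π₂ u)
    (prob : (Fin n → Fin L × Fin L) → ℝ)
    (hprob : ∀ ω, prob ω = ∏ i, P (ω i).1 (ω i).2)
    (E : ((Fin n → Fin L × Fin L) → ℝ) → ℝ)
    (hE : ∀ f, E f = ∑ ω, prob ω * f ω)
    (X₁ X₂ : Fin L → (Fin n → Fin L × Fin L) → ℝ)
    (hX₁ : ∀ w ω, X₁ w ω = ∑ i : Fin n, if (ω i).1 = w then 1 else 0)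
    (hX₂ : ∀ w ω, X₂ w ω = ∑ i : Fin n, if (ω i).2 = w then 1 else 0) :
    (∀ w, π₁ w = (1 / (n : ℝ)) * E (X₁ w))
    ∧ (∀ u, π₂ u = (1 / (n : ℝ)) * E (X₂ u))
    ∧ (∀ w u, P w u = (1 / 2) * (π₁ w + π₂ u
        - (π₁ w * π₂ u / (n : ℝ)) *
          E (fun ω => (X₁ w ω / π₁ w - X₂ u ω / π₂ u) ^ 2))) := by
  have hn' : (n : ℝ) ≠ 0 := Nat.cast_ne_zero.mpr (by omega)
  set q : Fin L × Fin L → ℝ := fun x => P x.1 x.2 with hqdef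
  have hq : ∑ x, q x = 1 := by rw [Fintype.sum_prod_type]; exact hP1
  have hprob' : ∀ ω : Fin n → Fin L × Fin L, prob ω = ∏ k, q (ω k) := hprob
  have marg1 : ∀ w, (∑ x : Fin L × Fin L, q x * (if x.1 = w then 1 else 0))
      = π₁ w := by
    intro w
    rw [Fintype.sum_prod_type, hπ₁]
    simp [hqdef, mul_ite, mul_one, mul_zero, Finset.sum_ite_eq']
  have marg2 : ∀ u, (∑ x : Fin L × Fin L, q x * (if x.2 = u then 1 else 0))
      = π₂ u := by
    intro u
    rw [Fintype.sum_prod_type_right, hπ₂]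
    simp [hqdef, mul_ite, mul_one, mul_zero, Finset.sum_ite_eq']
  have marg12 : ∀ w u, (∑ x : Fin L × Fin L,
      q x * ((if x.1 = w then 1 else 0) * (if x.2 = u then 1 else 0)))
      = P w u := by
    intro w u
    rw [Fintype.sum_prod_type]
    simp [hqdef, mul_ite, mul_one, mul_zero, Finset.sum_ite_eq']
  have EX1 : ∀ w, E (X₁ w) = n * π₁ w := by
    intro w
    rw [hE]
    simp_rw [hX₁, hprob', Finset.mul_sum]
    rw [Finset.sum_comm]
    have hterm : ∀ i : Fin n, (∑ ω : Fin n → Fin L × Fin L,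
        (∏ k, q (ω k)) * (if (ω i).1 = w then 1 else 0)) = π₁ w := by
      intro i
      have := E_single n q (fun x => if x.1 = w then 1 else 0) hq i
      rw [marg1] at this
      simpa using this
    rw [Finset.sum_congr rfl fun i (_ : i ∈ Finset.univ) => hterm i]
    simp [Finset.sum_const, Finset.card_univ, nsmul_eq_mul]
  have EX2 : ∀ u, E (X₂ u) = n * π₂ u := by
    intro u
    rw [hE]
    simp_rw [hX₂, hprob', Finset.mul_sum]
    rw [Finset.sum_comm]
    have hterm : ∀ i : Fin n, (∑ ω : Fin n → Fin L × Fin L,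
        (∏ k, q (ω k)) * (if (ω i).2 = u then 1 else 0)) = π₂ u := by
      intro i
      have := E_single n q (fun x => if x.2 = u then 1 else 0) hq i
      rw [marg2] at this
      simpa using this
    rw [Finset.sum_congr rfl fun i (_ : i ∈ Finset.univ) => hterm i]
    simp [Finset.sum_const, Finset.card_univ, nsmul_eq_mul]
  refine ⟨fun w => by rw [EX1]; field_simp, fun u => by rw [EX2]; field_simp, ?_⟩
  intro w u
  have h1 : π₁ w ≠ 0 := (hπ₁pos w).ne'
  have h2 : π₂ u ≠ 0 := (hπ₂pos u).ne'
  set f : Fin L × Fin L → ℝ := fun x =>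
    (if x.1 = w then 1 else 0) / π₁ w - (if x.2 = u then 1 else 0) / π₂ u
    with hfdef
  have hm1 : ∑ x, q x * f x = 0 := by
    simp_rw [hfdef, mul_sub, ← mul_div_assoc]
    rw [Finset.sum_sub_distrib, ← Finset.sum_div, ← Finset.sum_div,
        marg1, marg2, div_self h1, div_self h2, sub_self]
  have hm2 : ∑ x, q x * (f x * f x)
      = 1 / π₁ w + 1 / π₂ u - 2 * P w u / (π₁ w * π₂ u) := by
    have hpt : ∀ x : Fin L × Fin L, q x * (f x * f x)
        = q x * (if x.1 = w then 1 else 0) * (1 / (π₁ w) ^ 2)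
          - q x * ((if x.1 = w then 1 else 0) * (if x.2 = u then 1 else 0))
              * (2 / (π₁ w * π₂ u))
          + q x * (if x.2 = u then 1 else 0) * (1 / (π₂ u) ^ 2) := by
      intro x
      simp only [hfdef]
      rcases eq_or_ne x.1 w with a | a <;> rcases eq_or_ne x.2 u with b | b
      · rw [if_pos a, if_pos b]; ring
      · rw [if_pos a, if_neg b]; ring
      · rw [if_neg a, if_pos b]; ring
      · rw [if_neg a, if_neg b]; ring
    simp_rw [hpt]
    rw [Finset.sum_add_distrib, Finset.sum_sub_distrib,
        ← Finset.sum_mul, ← Finset.sum_mul, ← Finset.sum_mul,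
        marg1, marg2, marg12]
    field_simp
    ring
  have Esq : E (fun ω => (X₁ w ω / π₁ w - X₂ u ω / π₂ u) ^ 2)
      = n * (∑ x, q x * (f x * f x)) := by
    rw [hE]
    have hsum : ∀ ω : Fin n → Fin L × Fin L,
        X₁ w ω / π₁ w - X₂ u ω / π₂ u = ∑ i, f (ω i) := by
      intro ω
      rw [hX₁, hX₂, Finset.sum_div, Finset.sum_div, ← Finset.sum_sub_distrib]
    simp_rw [hsum, hprob', sq, Finset.sum_mul_sum, Finset.mul_sum]
    have swap : (∑ ω : Fin n → Fin L × Fin L, ∑ i : Fin n, ∑ j : Fin n,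
          (∏ k, q (ω k)) * (f (ω i) * f (ω j)))
        = ∑ i : Fin n, ∑ j : Fin n, ∑ ω : Fin n → Fin L × Fin L,
          (∏ k, q (ω k)) * (f (ω i) * f (ω j)) := by
      rw [Finset.sum_comm]
      exact Finset.sum_congr rfl fun i _ => Finset.sum_comm
    rw [swap]
    have hterm : ∀ i j : Fin n, (∑ ω : Fin n → Fin L × Fin L,
        (∏ k, q (ω k)) * (f (ω i) * f (ω j)))
        = if i = j then (∑ x, q x * (f x * f x)) else 0 := by
      intro i j
      rcases eq_or_ne i j with rfl | hij
      · rw [if_pos rfl]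
        have := E_single n q (fun x => f x * f x) hq i
        simpa using this
      · rw [if_neg hij]
        have := E_pair n q f f hq i j hij
        rw [hm1] at this
        simpa using this
    rw [Finset.sum_congr rfl fun i (_ : i ∈ Finset.univ) =>
      Finset.sum_congr rfl fun j (_ : j ∈ Finset.univ) => hterm i j]
    simp only [Finset.sum_ite_eq, Finset.mem_univ, if_true, Finset.sum_const,
      Finset.card_univ, Fintype.card_fin, nsmul_eq_mul, Finset.mul_sum]
  rw [Esq, hm2]
  field_simp
  ring
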